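/- Let m ∈ ℕ, let A and B be m×m complex matrices, and define Θ(t) = exp(−tA)·B·exp(tA) using the matrix exponential. Let T > 0 and let u, w : [0,T] → ℝ be piecewise constant functions. Then for every t ∈ [0,T], ‖∫_0^t u(s)Θ(s) ds − ∫_0^t w(s)Θ(s) ds‖ ≤ |∫_0^t (u(τ) − w(τ)) dτ| · ‖Θ(t)‖ + ∫_0^t |∫_0^s (u(τ) − w(τ)) dτ| · ‖exp(−sA)·(BA − AB)·exp(sA)‖ ds, where ‖·‖ denotes the operator norm on m×m complex matrices. -/

import Mathlib

open scoped Matrix.Norms.L2Operator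
open MeasureTheory intervalIntegral Set NormedSpace

/-- A function `f` is piecewise constant on `[0,T]` if there is a finite partition
`0 = t_0 < t_1 < … < t_m = T` such that `f` is constant on each interval `[t_{j-1}, t_j)`. -/
def PiecewiseConstOn (f : ℝ → ℝ) (T : ℝ) : Prop :=
  ∃ (m : ℕ) (t : ℕ → ℝ), 0 < m ∧ t 0 = 0 ∧ t m = T ∧
    (∀ j < m, t j < t (j + 1)) ∧
    ∀ j < m, ∀ x ∈ Set.Ico (t j) (t (j + 1)), f x = f (t j)

lemma pc_mono {n : ℕ} {t : ℕ → ℝ} (hlt : ∀ j < n, t j < t (j + 1)) :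
    ∀ j k, j ≤ k → k ≤ n → t j ≤ t k := by
  intro j k hjk hk
  induction k with
  | zero => simp [Nat.le_zero.mp hjk]
  | succ k ih =>
    rcases Nat.lt_or_ge j (k+1) with h | h
    · exact le_trans (ih (Nat.lt_succ_iff.mp h) (le_trans (Nat.le_succ k) hk))
        (le_of_lt (hlt k (Nat.lt_of_succ_le hk)))
    · have : j = k + 1 := le_antisymm hjk h
      simp [this]

open Classical in
lemma pc_exists_index {n : ℕ} {t : ℕ → ℝ} {T x : ℝ}
    (h0 : t 0 = 0) (hT : t n = T) (hx : x ∈ Set.Ico (0:ℝ) T) :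
    ∃ j < n, x ∈ Set.Ico (t j) (t (j + 1)) := by
  set j := Nat.findGreatest (fun j => t j ≤ x) n with hj
  have hjle : j ≤ n := Nat.findGreatest_le n
  have hspec : t j ≤ x :=
    Nat.findGreatest_spec (P := fun j => t j ≤ x) (Nat.zero_le n)
      (show t 0 ≤ x by rw [h0]; exact hx.1)
  have hjn : j < n := by
    rcases Nat.lt_or_ge j n with h | h
    · exact h
    · exfalso
      have : j = n := le_antisymm hjle h
      rw [this, hT] at hspec
      exact absurd hx.2 (not_lt.mpr hspec)
  have hxlt : x < t (j + 1) := by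
    by_contra h
    exact Nat.findGreatest_is_greatest (P := fun j => t j ≤ x) (Nat.lt_succ_self j)
      (Nat.succ_le_of_lt hjn) (not_lt.mp h)
  exact ⟨j, hjn, hspec, hxlt⟩

lemma PiecewiseConstOn.exists_piece {f : ℝ → ℝ} {T : ℝ} (hf : PiecewiseConstOn f T)
    {x : ℝ} (hx : x ∈ Set.Ico (0:ℝ) T) :
    ∃ a b : ℝ, x ∈ Set.Ico a b ∧ Set.Ico a b ⊆ Set.Ico (0:ℝ) T ∧
      ∀ y ∈ Set.Ico a b, f y = f a := by
  obtain ⟨n, t, hn, h0, hT, hlt, hconst⟩ := hf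
  obtain ⟨j, hjn, hxj⟩ := pc_exists_index h0 hT hx
  refine ⟨t j, t (j + 1), hxj, ?_, hconst j hjn⟩
  intro y hy
  exact ⟨le_trans (by rw [← h0]; exact pc_mono hlt 0 j (Nat.zero_le j) (le_of_lt hjn)) hy.1,
    lt_of_lt_of_le hy.2 (by rw [← hT]; exact pc_mono hlt (j+1) n (Nat.succ_le_of_lt hjn) le_rfl)⟩

lemma PiecewiseConstOn.integrableOn {f : ℝ → ℝ} {T : ℝ} (hf : PiecewiseConstOn f T) :
    IntegrableOn f (Set.Icc 0 T) := by
  obtain ⟨n, t, hn, h0, hT, hlt, hconst⟩ := hf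
  have hsub : Set.Icc (0:ℝ) T ⊆ (⋃ j ∈ Finset.range n, Set.Ico (t j) (t (j+1))) ∪ {T} := by
    intro x hx
    rcases eq_or_lt_of_le hx.2 with h | h
    · exact Or.inr (by simp [h])
    · obtain ⟨j, hj, hxj⟩ := pc_exists_index h0 hT ⟨hx.1, h⟩
      exact Or.inl (Set.mem_biUnion (Finset.mem_range.mpr hj) hxj)
  refine (IntegrableOn.union ?_ ?_).mono_set hsub
  · rw [integrableOn_finset_iUnion]
    intro j hj
    have : IntegrableOn (fun _ => f (t j)) (Set.Ico (t j) (t (j+1))) := by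
      apply (integrableOn_const_iff).mpr
      right
      rw [Real.volume_Ico]
      exact ENNReal.ofReal_lt_top
    exact this.congr_fun (fun x hx => (hconst j (Finset.mem_range.mp hj) x hx).symm)
      measurableSet_Ico
  · have hm : volume ({T} : Set ℝ) < ⊤ := by
      rw [Real.volume_singleton]; exact ENNReal.zero_lt_top
    have hc : IntegrableOn (fun _ => f T) ({T} : Set ℝ) := (integrableOn_const_iff).mpr (Or.inr hm)
    exact hc.congr_fun (fun x hx => by rw [Set.mem_singleton_iff.mp hx]) (measurableSet_singleton T)

lemma PiecewiseConstOn.intervalIntegrable {f : ℝ → ℝ} {T : ℝ} (hf : PiecewiseConstOn f T)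
    {a b : ℝ} (ha : a ∈ Set.Icc (0:ℝ) T) (hb : b ∈ Set.Icc (0:ℝ) T) :
    IntervalIntegrable f volume a b :=
  (hf.integrableOn.mono_set (Set.uIcc_subset_Icc ha hb)).intervalIntegrable

lemma PiecewiseConstOn.hasDerivWithinAt_primitive {f : ℝ → ℝ} {T : ℝ}
    (hf : PiecewiseConstOn f T) (hT : 0 ≤ T) {x : ℝ} (hx : x ∈ Set.Ico (0:ℝ) T) :
    HasDerivWithinAt (fun y => ∫ s in (0:ℝ)..y, f s) (f x) (Set.Ioi x) x := by
  obtain ⟨a, b, hxab, hsub, hcon⟩ := hf.exists_piece hx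
  have hmem : ∀ y ∈ Set.Ico a b, y ∈ Set.Icc (0:ℝ) T := fun y hy =>
    ⟨(hsub hy).1, le_of_lt (hsub hy).2⟩
  have hfx : f x = f a := hcon x hxab
  have key : ∀ y ∈ Set.Ico x b,
      (∫ s in (0:ℝ)..y, f s) = (∫ s in (0:ℝ)..x, f s) + f x * (y - x) := by
    intro y hy
    have hyab : y ∈ Set.Ico a b := ⟨le_trans hxab.1 hy.1, hy.2⟩
    have h1 : IntervalIntegrable f volume 0 x :=
      hf.intervalIntegrable ⟨le_rfl, hT⟩ (hmem x hxab)
    have h2 : IntervalIntegrable f volume x y :=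
      hf.intervalIntegrable (hmem x hxab) (hmem y hyab)
    rw [← integral_add_adjacent_intervals h1 h2]
    congr 1
    have : ∀ s ∈ Set.uIcc x y, f s = f a := by
      intro s hs
      rw [Set.uIcc_of_le hy.1] at hs
      exact hcon s ⟨le_trans hxab.1 hs.1, lt_of_le_of_lt hs.2 hy.2⟩
    rw [integral_congr this, intervalIntegral.integral_const, smul_eq_mul, hfx, mul_comm]
  have haff : HasDerivWithinAt
      (fun y => (∫ s in (0:ℝ)..x, f s) + f x * (y - x)) (f x) (Set.Ioi x) x := by
    have h1 : HasDerivAt (fun y : ℝ => (∫ s in (0:ℝ)..x, f s) + f x * (y - x)) (f x * 1) x :=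
      (((hasDerivAt_id x).sub_const x).const_mul (f x)).const_add _
    simpa using h1.hasDerivWithinAt
  refine haff.congr_of_eventuallyEq ?_ (by simp)
  filter_upwards [Ioo_mem_nhdsGT_of_mem (show x ∈ Set.Ico x b from ⟨le_rfl, hxab.2⟩)] with y hy
  exact key y ⟨le_of_lt hy.1, hy.2⟩

lemma hasDerivAt_Theta (m : ℕ) (A B : Matrix (Fin m) (Fin m) ℂ) (s : ℝ) :
    HasDerivAt (fun u : ℝ => exp ((-u) • A) * B * exp (u • A))
      (exp ((-s) • A) * (B * A - A * B) * exp (s • A)) s := by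
  have h1 : HasDerivAt (fun u : ℝ => exp (u • A)) (exp (s • A) * A) s := by
    exact hasDerivAt_exp_smul_const A s
  have h2 : HasDerivAt (fun u : ℝ => exp ((-u) • A)) (exp ((-s) • A) * (-A)) s := by
    simp only [neg_smul, ← smul_neg]
    exact hasDerivAt_exp_smul_const (-A) s
  have h3 := (h2.mul_const B).mul h1
  have hcomm : exp (s • A) * A = A * exp (s • A) :=
    (((Commute.refl A).smul_left s).exp_left).eq
  refine h3.congr_deriv ?_
  rw [hcomm]
  noncomm_ring

/-- integration by parts estimate for `∫ (u - w) Θ`,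
where `Θ(t) = exp(-tA) B exp(tA)` and `‖·‖` is the operator norm on matrices. -/
theorem integral_control_matrix_estimate
    (m : ℕ) (A B : Matrix (Fin m) (Fin m) ℂ)
    (Θ : ℝ → Matrix (Fin m) (Fin m) ℂ)
    (hΘ : ∀ t : ℝ, Θ t = NormedSpace.exp ((-t) • A) * B * NormedSpace.exp (t • A))
    (T : ℝ) (hT : 0 < T)
    (u w : ℝ → ℝ) (hu : PiecewiseConstOn u T) (hw : PiecewiseConstOn w T) :
    ∀ t ∈ Set.Icc (0 : ℝ) T,
      ‖(∫ s in (0 : ℝ)..t, u s • Θ s) - ∫ s in (0 : ℝ)..t, w s • Θ s‖ ≤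
        |∫ τ in (0 : ℝ)..t, (u τ - w τ)| * ‖Θ t‖ +
        ∫ s in (0 : ℝ)..t,
          |∫ τ in (0 : ℝ)..s, (u τ - w τ)| *
            ‖NormedSpace.exp ((-s) • A) * (B * A - A * B) * NormedSpace.exp (s • A)‖ := by
  have hΘfun : Θ = fun s : ℝ => exp ((-s) • A) * B * exp (s • A) := funext hΘ
  subst hΘfun
  intro t ht
  have h0t : (0:ℝ) ≤ t := ht.1
  have h0mem : (0:ℝ) ∈ Set.Icc (0:ℝ) T := ⟨le_rfl, hT.le⟩
  -- basic continuity facts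
  have he1 : Continuous (fun s : ℝ => exp ((-s) • A)) :=
    (continuous_iff_continuousAt.mpr fun x => (exp_analytic (𝕂 := ℂ) x).continuousAt :
      Continuous (exp : Matrix (Fin m) (Fin m) ℂ → _)).comp ((continuous_neg).smul continuous_const)
  have he2 : Continuous (fun s : ℝ => exp (s • A)) :=
    (continuous_iff_continuousAt.mpr fun x => (exp_analytic (𝕂 := ℂ) x).continuousAt :
      Continuous (exp : Matrix (Fin m) (Fin m) ℂ → _)).comp (continuous_id.smul continuous_const)
  have hΘc : Continuous (fun s : ℝ => exp ((-s) • A) * B * exp (s • A)) :=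
    (he1.mul continuous_const).mul he2
  have hΘ'c : Continuous (fun s : ℝ => exp ((-s) • A) * (B * A - A * B) * exp (s • A)) :=
    (he1.mul continuous_const).mul he2
  -- integrability of u, w, v on subintervals of [0, T]
  have huI : ∀ {a b : ℝ}, a ∈ Set.Icc (0:ℝ) T → b ∈ Set.Icc (0:ℝ) T →
      IntervalIntegrable u volume a b := fun ha hb => hu.intervalIntegrable ha hb
  have hwI : ∀ {a b : ℝ}, a ∈ Set.Icc (0:ℝ) T → b ∈ Set.Icc (0:ℝ) T →
      IntervalIntegrable w volume a b := fun ha hb => hw.intervalIntegrable ha hb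
  have hvI : IntervalIntegrable (fun τ => u τ - w τ) volume 0 t :=
    (huI h0mem ht).sub (hwI h0mem ht)
  -- integrability of scalar • matrix-valued combos
  have smul_int : ∀ (f : ℝ → ℝ), IntervalIntegrable f volume 0 t →
      IntervalIntegrable (fun s => f s • (fun s : ℝ => exp ((-s) • A) * B * exp (s • A)) s)
        volume 0 t := by
    intro f hf
    have h1 : IntervalIntegrable (fun s => f s • (1 : Matrix (Fin m) (Fin m) ℂ)) volume 0 t :=
      ⟨hf.1.smul_const _, hf.2.smul_const _⟩
    have h2 := h1.mul_continuousOn (hΘc.continuousOn)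
    simpa [smul_mul_assoc] using h2
  have huΘ := smul_int u (huI h0mem ht)
  have hwΘ := smul_int w (hwI h0mem ht)
  have hvΘ := smul_int (fun τ => u τ - w τ) hvI
  -- continuity of the primitive V
  have hVc : ContinuousOn (fun y => ∫ τ in (0:ℝ)..y, (u τ - w τ)) (Set.Icc 0 t) := by
    have := continuousOn_primitive_interval' hvI (by rw [Set.uIcc_of_le h0t]; exact ⟨le_rfl, h0t⟩)
    rwa [Set.uIcc_of_le h0t] at this
  have hVΘ'I : IntervalIntegrable
      (fun s => (∫ τ in (0:ℝ)..s, (u τ - w τ)) •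
        (exp ((-s) • A) * (B * A - A * B) * exp (s • A))) volume 0 t := by
    apply ContinuousOn.intervalIntegrable
    rw [Set.uIcc_of_le h0t]
    exact hVc.smul hΘ'c.continuousOn
  -- derivative of the product within Ioi x, for x ∈ Ioo 0 t
  have hderiv : ∀ x ∈ Set.Ioo (0:ℝ) t,
      HasDerivWithinAt
        (fun y => (∫ τ in (0:ℝ)..y, (u τ - w τ)) •
          (fun s : ℝ => exp ((-s) • A) * B * exp (s • A)) y)
        ((∫ τ in (0:ℝ)..x, (u τ - w τ)) •
            (exp ((-x) • A) * (B * A - A * B) * exp (x • A)) +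
          (u x - w x) • (exp ((-x) • A) * B * exp (x • A)))
        (Set.Ioi x) x := by
    intro x hx
    have hxIco : x ∈ Set.Ico (0:ℝ) T := ⟨hx.1.le, lt_of_lt_of_le hx.2 ht.2⟩
    have hxmem : x ∈ Set.Icc (0:ℝ) T := ⟨hxIco.1, hxIco.2.le⟩
    have hU := hu.hasDerivWithinAt_primitive hT.le hxIco
    have hW := hw.hasDerivWithinAt_primitive hT.le hxIco
    have hV : HasDerivWithinAt (fun y => ∫ τ in (0:ℝ)..y, (u τ - w τ)) (u x - w x)
        (Set.Ioi x) x := by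
      refine (hU.sub hW).congr_of_eventuallyEq ?_
        (integral_sub (huI h0mem hxmem) (hwI h0mem hxmem))
      filter_upwards [Ioo_mem_nhdsGT_of_mem
        (show x ∈ Set.Ico x T from ⟨le_rfl, hxIco.2⟩)] with y hy
      exact integral_sub (huI h0mem ⟨le_trans hxIco.1 hy.1.le, hy.2.le⟩)
        (hwI h0mem ⟨le_trans hxIco.1 hy.1.le, hy.2.le⟩)
    exact hV.smul (hasDerivAt_Theta m A B x).hasDerivWithinAt
  -- continuity of the product on [0, t]
  have hcont : ContinuousOn
      (fun y => (∫ τ in (0:ℝ)..y, (u τ - w τ)) •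
        (fun s : ℝ => exp ((-s) • A) * B * exp (s • A)) y) (Set.Icc 0 t) :=
    hVc.smul hΘc.continuousOn
  -- integration by parts via FTC
  have hIBP := integral_eq_sub_of_hasDeriv_right_of_le h0t hcont hderiv (hVΘ'I.add hvΘ)
  rw [integral_add hVΘ'I hvΘ] at hIBP
  simp only [intervalIntegral.integral_same, zero_smul, sub_zero] at hIBP
  -- rewrite the LHS difference as a single integral
  rw [← integral_sub huΘ hwΘ]
  have hLHS : (∫ s in (0:ℝ)..t,
      (u s • (fun s : ℝ => exp ((-s) • A) * B * exp (s • A)) s -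
        w s • (fun s : ℝ => exp ((-s) • A) * B * exp (s • A)) s)) =
      ∫ s in (0:ℝ)..t, (u s - w s) •
        (fun s : ℝ => exp ((-s) • A) * B * exp (s • A)) s := by
    congr 1
    funext s
    rw [sub_smul]
  rw [hLHS]
  have hkey : (∫ s in (0:ℝ)..t, (u s - w s) •
      (fun s : ℝ => exp ((-s) • A) * B * exp (s • A)) s) =
      (∫ τ in (0:ℝ)..t, (u τ - w τ)) •
        (fun s : ℝ => exp ((-s) • A) * B * exp (s • A)) t -
      ∫ s in (0:ℝ)..t, (∫ τ in (0:ℝ)..s, (u τ - w τ)) •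
        (exp ((-s) • A) * (B * A - A * B) * exp (s • A)) := by
    rw [← hIBP, add_sub_cancel_left]
  rw [hkey]
  refine le_trans (norm_sub_le _ _) (add_le_add (le_of_eq ?_) ?_)
  · rw [norm_smul, Real.norm_eq_abs]
  · refine le_trans (intervalIntegral.norm_integral_le_integral_norm h0t) (le_of_eq ?_)
    congr 1
    funext s
    rw [norm_smul, Real.norm_eq_abs]
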